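/- Let n be a positive natural number, let μ₁,…,μ_n be Borel probability measures on ℂ, and let ν̃ = (1/n!)·Σ_{π ∈ S_n} μ_{π(1)} × ⋯ × μ_{π(n)} be the symmetrization of the product measure μ₁ × ⋯ × μ_n on ℂⁿ. For p ∈ {1,…,n}, let ν̃^{(p)} be the marginal of ν̃ on the first p coordinates; in particular ν̃^{(1)} = (1/n)(μ₁ + ⋯ + μ_n). Then the total variation norm of the signed measure ν̃^{(p)} − ν̃^{(1)} × ⋯ × ν̃^{(1)} (p-fold product) is at most 2·((n−p)!·n^p/n! − 1). -/

import Mathlib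

open MeasureTheory
open scoped ENNReal NNReal


open Set

lemma tv_sub_le {α : Type*} [MeasurableSpace α] (μ ρ : Measure α)
    [IsFiniteMeasure μ] [IsFiniteMeasure ρ] :
    (μ.toSignedMeasure - ρ.toSignedMeasure).totalVariation Set.univ
      ≤ μ Set.univ + ρ Set.univ := by
  set s := μ.toSignedMeasure - ρ.toSignedMeasure with hs
  obtain ⟨i, hi₁, hi₂, hi₃, hpos, hneg⟩ := s.toJordanDecomposition_spec
  rw [SignedMeasure.totalVariation, Measure.add_apply, hpos, hneg,
    SignedMeasure.toMeasureOfZeroLE_apply _ _ _ MeasurableSet.univ,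
    SignedMeasure.toMeasureOfLEZero_apply _ _ _ MeasurableSet.univ]
  have hsval : ∀ (j : Set α), MeasurableSet j → s j = (μ j).toReal - (ρ j).toReal := by
    intro j hj
    rw [hs, VectorMeasure.sub_apply, Measure.toSignedMeasure_apply_measurable hj,
      Measure.toSignedMeasure_apply_measurable hj]
    rfl
  have key : ∀ (x : ℝ) (h : 0 ≤ x), (ENNReal.ofNNReal (NNReal.mk x h)) = ENNReal.ofReal x := by
    intro x h
    rw [ENNReal.ofReal, Real.toNNReal_of_nonneg h]
  refine add_le_add ?_ ?_
  · rw [key]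
    have h1 : s (i ∩ Set.univ) ≤ (μ Set.univ).toReal := by
      rw [hsval _ (hi₁.inter MeasurableSet.univ)]
      have := ENNReal.toReal_mono (measure_ne_top μ Set.univ)
        (measure_mono (Set.inter_subset_right (s := i) (t := Set.univ)))
      have h2 : 0 ≤ (ρ (i ∩ Set.univ)).toReal := ENNReal.toReal_nonneg
      linarith
    calc ENNReal.ofReal (s (i ∩ Set.univ)) ≤ ENNReal.ofReal ((μ Set.univ).toReal) :=
          ENNReal.ofReal_le_ofReal h1
      _ = μ Set.univ := ENNReal.ofReal_toReal (measure_ne_top μ _)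
  · rw [key]
    have h1 : -s (iᶜ ∩ Set.univ) ≤ (ρ Set.univ).toReal := by
      rw [hsval _ (hi₁.compl.inter MeasurableSet.univ)]
      have := ENNReal.toReal_mono (measure_ne_top ρ Set.univ)
        (measure_mono (Set.inter_subset_right (s := iᶜ) (t := Set.univ)))
      have h2 : 0 ≤ (μ (iᶜ ∩ Set.univ)).toReal := ENNReal.toReal_nonneg
      linarith
    calc ENNReal.ofReal (-s (iᶜ ∩ Set.univ)) ≤ ENNReal.ofReal ((ρ Set.univ).toReal) :=
          ENNReal.ofReal_le_ofReal h1
      _ = ρ Set.univ := ENNReal.ofReal_toReal (measure_ne_top ρ _)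

lemma fiber_card {n : ℕ} {α : Type*} [Fintype α] [DecidableEq α]
    (g f : α → Fin n) (hg : Function.Injective g) (hf : Function.Injective f) :
    Nat.card {π : Equiv.Perm (Fin n) // ∀ x, π (g x) = f x}
      = (n - Fintype.card α).factorial := by
  classical
  set e₀ : ↥(Set.range g) ≃ ↥(Set.range f) :=
    (Equiv.ofInjective g hg).symm.trans (Equiv.ofInjective f hf) with he₀
  have key : ∀ (π : Equiv.Perm (Fin n)),
      (∀ x, π (g x) = f x) ↔ ∀ y : ↥(Set.range g), π ↑y = ↑(e₀ y) := by
    intro π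
    constructor
    · rintro h ⟨-, x, rfl⟩
      have : e₀ (Equiv.ofInjective g hg x) = Equiv.ofInjective f hf x := by
        simp [he₀]
      have h2 : (⟨g x, ⟨x, rfl⟩⟩ : ↥(Set.range g)) = Equiv.ofInjective g hg x := rfl
      rw [h2, this]
      exact h x
    · intro h x
      have := h ⟨g x, ⟨x, rfl⟩⟩
      have h2 : (⟨g x, ⟨x, rfl⟩⟩ : ↥(Set.range g)) = Equiv.ofInjective g hg x := rfl
      rw [h2] at this
      simpa [he₀] using this
  have e1 : {π : Equiv.Perm (Fin n) // ∀ x, π (g x) = f x}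
      ≃ { e : Fin n ≃ Fin n // ∀ y : ↥(Set.range g), e ↑y = ↑(e₀ y) } :=
    Equiv.subtypeEquivRight key
  have e2 := (Equiv.Set.compl e₀)
  rw [Nat.card_congr (e1.trans e2)]
  have hcg : Fintype.card ↥(Set.range g)ᶜ = n - Fintype.card α := by
    rw [Fintype.card_compl_set, Set.card_range_of_injective hg, Fintype.card_fin]
  have hcf : Fintype.card ↥(Set.range f)ᶜ = n - Fintype.card α := by
    rw [Fintype.card_compl_set, Set.card_range_of_injective hf, Fintype.card_fin]
  rw [Nat.card_eq_fintype_card, Fintype.card_equiv (Fintype.equivOfCardEq (hcg.trans hcf.symm)),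
    hcg]
lemma perm_sum {n : ℕ} {α : Type*} [Fintype α] [DecidableEq α] {M : Type*} [AddCommMonoid M]
    (g : α → Fin n) (hg : Function.Injective g) (F : (α → Fin n) → M) :
    ∑ π : Equiv.Perm (Fin n), F (fun x => π (g x))
      = ∑ f ∈ Finset.univ.filter (fun f : α → Fin n => Function.Injective f),
          (n - Fintype.card α).factorial • F f := by
  classical
  rw [Finset.sum_comp F (fun π : Equiv.Perm (Fin n) => fun x => π (g x))]
  have hcard : ∀ f : α → Fin n, Function.Injective f →
      (Finset.univ.filter (fun π : Equiv.Perm (Fin n) => (fun x => π (g x)) = f)).card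
        = (n - Fintype.card α).factorial := by
    intro f hf
    rw [← fiber_card g f hg hf, Nat.card_eq_fintype_card, Fintype.card_subtype]
    congr 1
    apply Finset.filter_congr
    intro π _
    simp [funext_iff]
  have himage : Finset.image (fun π : Equiv.Perm (Fin n) => fun x => π (g x)) Finset.univ
      = Finset.univ.filter (fun f : α → Fin n => Function.Injective f) := by
    apply Finset.ext
    intro f
    simp only [Finset.mem_image, Finset.mem_univ, true_and, Finset.mem_filter]
    constructor
    · rintro ⟨π, rfl⟩
      exact π.injective.comp hg
    · intro hf
      have hpos : 0 < Nat.card {π : Equiv.Perm (Fin n) // ∀ x, π (g x) = f x} := by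
        rw [fiber_card g f hg hf]; exact Nat.factorial_pos _
      obtain ⟨π, hπ⟩ := (Nat.card_pos_iff.mp hpos).1
      exact ⟨π, funext hπ⟩
  rw [himage]
  apply Finset.sum_congr rfl
  intro f hf
  rw [hcard f (by simpa using hf)]
lemma pi_map_eval {n : ℕ} (κ : Fin n → Measure ℂ) [∀ i, IsProbabilityMeasure (κ i)] (i0 : Fin n) :
    (Measure.pi κ).map (fun z => z i0) = κ i0 := by
  ext s hs
  rw [Measure.map_apply (measurable_pi_apply i0) hs]
  have hpre : (fun z : Fin n → ℂ => z i0) ⁻¹' s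
      = Set.pi Set.univ (Function.update (fun _ => Set.univ) i0 s) := by
    ext z
    simp only [Set.mem_preimage, Set.mem_pi, Set.mem_univ, true_implies]
    constructor
    · intro h i
      rcases eq_or_ne i i0 with rfl | hne
      · simpa using h
      · simp [Function.update_of_ne hne]
    · intro h
      simpa using h i0
  rw [hpre, Measure.pi_pi]
  rw [Finset.prod_eq_single i0 (fun i _ hi => by simp [Function.update_of_ne hi])
    (fun h => absurd (Finset.mem_univ i0) h)]
  simp

lemma map_pi_castLE {n p : ℕ} (hpn : p ≤ n) (κ : Fin n → Measure ℂ)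
    [∀ i, IsProbabilityMeasure (κ i)] :
    (Measure.pi κ).map (fun z (i : Fin p) => z (Fin.castLE hpn i))
      = Measure.pi fun i : Fin p => κ (Fin.castLE hpn i) := by
  have hF : Measurable (fun z : Fin n → ℂ => fun i : Fin p => z (Fin.castLE hpn i)) :=
    measurable_pi_lambda _ fun i => measurable_pi_apply _
  refine (Measure.pi_eq fun s hs => ?_).symm
  rw [Measure.map_apply hF (MeasurableSet.univ_pi hs)]
  classical
  set t : Fin n → Set ℂ := fun i => if h : (i : ℕ) < p then s ⟨i, h⟩ else Set.univ with ht
  have hpre : (fun z : Fin n → ℂ => fun i : Fin p => z (Fin.castLE hpn i)) ⁻¹' Set.pi Set.univ s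
      = Set.pi Set.univ t := by
    ext z
    simp only [Set.mem_preimage, Set.mem_pi, Set.mem_univ, true_implies, ht]
    constructor
    · intro h i
      by_cases hi : (i : ℕ) < p
      · have := h ⟨i, hi⟩
        simpa [hi, Fin.castLE] using this
      · simp [hi]
    · intro h i
      have := h (Fin.castLE hpn i)
      simpa [i.isLt, Fin.castLE] using this
  rw [hpre, Measure.pi_pi]
  have h1 : ∏ i ∈ Finset.univ.map (Fin.castLEEmb hpn), κ i (t i)
      = ∏ i : Fin n, κ i (t i) := by
    apply Finset.prod_subset (Finset.subset_univ _)
    intro i _ hi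
    have hip : ¬ (i : ℕ) < p := by
      intro hlt
      apply hi
      simp only [Finset.mem_map, Finset.mem_univ, true_and]
      exact ⟨⟨i, hlt⟩, rfl⟩
    simp [ht, hip]
  rw [← h1, Finset.prod_map Finset.univ (Fin.castLEEmb hpn) (fun i => κ i (t i))]
  apply Finset.prod_congr rfl
  intro i _
  congr 1
  simp [ht, Fin.castLE, i.isLt]

lemma pi_const_smul_sum {p n : ℕ} (κ : Fin n → Measure ℂ) [∀ j, IsProbabilityMeasure (κ j)]
    (c : ℝ≥0∞) (μ' : Measure ℂ) [IsProbabilityMeasure μ'] (h : μ' = c • ∑ j, κ j) :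
    Measure.pi (fun _ : Fin p => μ')
      = ∑ f : Fin p → Fin n, (c ^ p) • Measure.pi fun i => κ (f i) := by
  classical
  refine Measure.pi_eq fun s hs => ?_
  rw [Measure.finset_sum_apply]
  have : ∀ f : Fin p → Fin n,
      ((c ^ p) • Measure.pi fun i => κ (f i)) (Set.pi Set.univ s)
        = c ^ p * ∏ i, κ (f i) (s i) := by
    intro f
    rw [Measure.smul_apply, Measure.pi_pi]
    rfl
  rw [Finset.sum_congr rfl fun f _ => this f, ← Finset.mul_sum]
  have hrw : ∀ i : Fin p, μ' (s i) = c * ∑ j, κ j (s i) := by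
    intro i
    rw [h, Measure.smul_apply, Measure.finset_sum_apply]
    rfl
  symm
  calc ∏ i, μ' (s i) = ∏ i : Fin p, (c * ∑ j, κ j (s i)) :=
        Finset.prod_congr rfl fun i _ => hrw i
    _ = c ^ p * ∏ i : Fin p, ∑ j, κ j (s i) := by
        rw [Finset.prod_mul_distrib, Finset.prod_const, Finset.card_univ, Fintype.card_fin]
    _ = c ^ p * ∑ f : Fin p → Fin n, ∏ i, κ (f i) (s i) := by
        congr 1
        rw [Finset.prod_univ_sum]
        rw [Fintype.piFinset_univ]

lemma isFiniteMeasure_smul {α : Type*} [MeasurableSpace α] (c : ℝ≥0∞) (hc : c ≠ ⊤)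
    (m : Measure α) [IsFiniteMeasure m] : IsFiniteMeasure (c • m) :=
  ⟨by
    rw [Measure.smul_apply, smul_eq_mul]
    exact ENNReal.mul_lt_top hc.lt_top (measure_lt_top m Set.univ)⟩

lemma toSignedMeasure_congr {α : Type*} [MeasurableSpace α] {μ ν : Measure α}
    [IsFiniteMeasure μ] [IsFiniteMeasure ν] (h : μ = ν) :
    μ.toSignedMeasure = ν.toSignedMeasure := by
  subst h; rfl


/-- Total variation bound for the difference between the `p`-th marginal of the
symmetrization `ν̃ = (1/n!)·Σ_{π∈Sₙ} μ_{π(1)}×⋯×μ_{π(n)}` and the `p`-fold product of its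
first marginal `ν̃⁽¹⁾`:  `‖ν̃⁽ᵖ⁾ − ν̃⁽¹⁾×⋯×ν̃⁽¹⁾‖ ≤ 2·((n−p)!·nᵖ/n! − 1)`. -/
theorem stmt3 (n p : ℕ) (hn : 0 < n) (hp1 : 1 ≤ p) (hpn : p ≤ n)
    (μ : Fin n → Measure ℂ) [∀ i, IsProbabilityMeasure (μ i)]
    (ν : Measure (Fin n → ℂ))
    (hν : ν = (n.factorial : ℝ≥0∞)⁻¹ •
      ∑ π : Equiv.Perm (Fin n), Measure.pi fun i => μ (π i))
    (νp : Measure (Fin p → ℂ)) [IsProbabilityMeasure νp]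
    (hνp : νp = ν.map fun z (i : Fin p) => z (Fin.castLE hpn i))
    (ν1 : Measure ℂ) [IsProbabilityMeasure ν1]
    (hν1 : ν1 = ν.map fun z => z ⟨0, hn⟩) :
    (νp.toSignedMeasure -
        (Measure.pi fun _ : Fin p => ν1).toSignedMeasure).totalVariation Set.univ
      ≤ ENNReal.ofReal
          (2 * (((n - p).factorial : ℝ) * (n : ℝ) ^ p / (n.factorial : ℝ) - 1)) := by
  classical
  set ν1p : Measure (Fin p → ℂ) := Measure.pi fun _ : Fin p => ν1 with hν1pdef
  set P : (Fin p → Fin n) → Measure (Fin p → ℂ) :=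
    fun f => Measure.pi fun i => μ (f i) with hP
  have hNne0 : ((n.factorial : ℝ≥0∞)) ≠ 0 := by
    exact_mod_cast Nat.cast_ne_zero.mpr n.factorial_ne_zero
  have hNnetop : ((n.factorial : ℝ≥0∞)) ≠ ⊤ := ENNReal.natCast_ne_top _
  have hnne0 : ((n : ℝ≥0∞)) ≠ 0 := by exact_mod_cast Nat.cast_ne_zero.mpr hn.ne'
  have hnnetop : ((n : ℝ≥0∞)) ≠ ⊤ := ENNReal.natCast_ne_top _
  have hF : Measurable (fun z : Fin n → ℂ => fun i : Fin p => z (Fin.castLE hpn i)) :=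
    measurable_pi_lambda _ fun i => measurable_pi_apply _
  -- Step 1: expand νp as a sum over permutations
  have hνp2 : νp = (n.factorial : ℝ≥0∞)⁻¹ •
      ∑ π : Equiv.Perm (Fin n), P (fun x => π (Fin.castLE hpn x)) := by
    rw [hνp, hν, ← Measure.mapₗ_apply_of_measurable hF, _root_.map_smul, _root_.map_sum]
    congr 1
    refine Finset.sum_congr rfl fun π _ => ?_
    rw [Measure.mapₗ_apply_of_measurable hF, map_pi_castLE hpn (fun i => μ (π i))]
  -- Step 2: group by the restricted injection
  have hνp3 : νp = (n.factorial : ℝ≥0∞)⁻¹ •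
      ∑ f ∈ Finset.univ.filter (fun f : Fin p → Fin n => Function.Injective f),
        ((n - p).factorial : ℝ≥0∞) • P f := by
    rw [hνp2, perm_sum (Fin.castLE hpn) (Fin.castLE_injective hpn) P]
    congr 1
    refine Finset.sum_congr rfl fun f _ => ?_
    rw [Fintype.card_fin, Nat.cast_smul_eq_nsmul]
  -- Step 3: identify ν1 with the average of the μ i
  have hν1c : ν1 = (n : ℝ≥0∞)⁻¹ • ∑ j, μ j := by
    have he : Measurable (fun z : Fin n → ℂ => z (⟨0, hn⟩ : Fin n)) := measurable_pi_apply _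
    have hb : ν1 = (n.factorial : ℝ≥0∞)⁻¹ •
        ∑ π : Equiv.Perm (Fin n), μ (π ⟨0, hn⟩) := by
      rw [hν1, hν, ← Measure.mapₗ_apply_of_measurable he, _root_.map_smul, _root_.map_sum]
      congr 1
      refine Finset.sum_congr rfl fun π _ => ?_
      rw [Measure.mapₗ_apply_of_measurable he, pi_map_eval (fun i => μ (π i)) ⟨0, hn⟩]
    have hsum : ∑ π : Equiv.Perm (Fin n), μ (π ⟨0, hn⟩)
        = ((n - 1).factorial : ℝ≥0∞) • ∑ j, μ j := by
      have := perm_sum (n := n) (α := Unit) (fun _ => (⟨0, hn⟩ : Fin n))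
        (fun a b _ => Subsingleton.elim a b) (fun f => μ (f Unit.unit))
      simp only [Fintype.card_unit] at this
      rw [this]
      have hfilter : (Finset.univ.filter
          (fun f : Unit → Fin n => Function.Injective f)) = Finset.univ := by
        apply Finset.filter_true_of_mem
        intro f _ a b _
        exact Subsingleton.elim a b
      rw [hfilter, Finset.smul_sum]
      refine Fintype.sum_equiv (Equiv.funUnique Unit (Fin n)) _ _ fun f => ?_
      rw [Nat.cast_smul_eq_nsmul]
      rfl
    rw [hb, hsum, smul_smul]
    congr 1
    have hNfac : ((n.factorial : ℝ≥0∞)) = (n : ℝ≥0∞) * ((n - 1).factorial : ℝ≥0∞) := by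
      rw [← Nat.cast_mul, Nat.mul_factorial_pred hn.ne']
    have hfacne0 : (((n - 1).factorial : ℝ≥0∞)) ≠ 0 := by
      exact_mod_cast Nat.cast_ne_zero.mpr (n - 1).factorial_ne_zero
    rw [hNfac, ENNReal.mul_inv (Or.inl hnne0) (Or.inl hnnetop), mul_assoc,
      ENNReal.inv_mul_cancel hfacne0 (ENNReal.natCast_ne_top _), mul_one]
  -- Step 4: expand the product of the first marginal
  have hν1p : ν1p = ∑ f : Fin p → Fin n, ((n : ℝ≥0∞)⁻¹ ^ p) • P f :=
    pi_const_smul_sum μ _ ν1 hν1c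
  -- Step 5: the key inequality νp ≤ b • ν1p
  set b : ℝ≥0∞ := ((n - p).factorial : ℝ≥0∞) * (n : ℝ≥0∞) ^ p * (n.factorial : ℝ≥0∞)⁻¹
    with hbdef
  have hbnetop : b ≠ ⊤ := by
    rw [hbdef]
    exact ENNReal.mul_ne_top (ENNReal.mul_ne_top (ENNReal.natCast_ne_top _)
      (by exact ENNReal.pow_ne_top hnnetop)) (ENNReal.inv_ne_top.mpr hNne0)
  have hcoef : b * (n : ℝ≥0∞)⁻¹ ^ p
      = ((n - p).factorial : ℝ≥0∞) * (n.factorial : ℝ≥0∞)⁻¹ := by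
    rw [hbdef]
    have : (n : ℝ≥0∞) ^ p * (n : ℝ≥0∞)⁻¹ ^ p = 1 := by
      rw [← mul_pow, ENNReal.mul_inv_cancel hnne0 hnnetop, one_pow]
    calc ((n - p).factorial : ℝ≥0∞) * (n : ℝ≥0∞) ^ p * (n.factorial : ℝ≥0∞)⁻¹
          * (n : ℝ≥0∞)⁻¹ ^ p
        = ((n - p).factorial : ℝ≥0∞) * (n.factorial : ℝ≥0∞)⁻¹
          * ((n : ℝ≥0∞) ^ p * (n : ℝ≥0∞)⁻¹ ^ p) := by ring
      _ = ((n - p).factorial : ℝ≥0∞) * (n.factorial : ℝ≥0∞)⁻¹ := by rw [this, mul_one]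
  have hle : νp ≤ b • ν1p := by
    rw [hνp3, hν1p]
    rw [Measure.le_iff]
    intro s hs
    have lhs_eq : ((n.factorial : ℝ≥0∞)⁻¹ •
        ∑ f ∈ Finset.univ.filter (fun f : Fin p → Fin n => Function.Injective f),
          ((n - p).factorial : ℝ≥0∞) • P f) s
        = ∑ f ∈ Finset.univ.filter (fun f : Fin p → Fin n => Function.Injective f),
            (((n - p).factorial : ℝ≥0∞) * (n.factorial : ℝ≥0∞)⁻¹) * P f s := by
      rw [Measure.smul_apply, Measure.finset_sum_apply, smul_eq_mul, Finset.mul_sum]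
      refine Finset.sum_congr rfl fun f _ => ?_
      rw [Measure.smul_apply, smul_eq_mul]
      ring
    have rhs_eq : (b • ∑ f : Fin p → Fin n, ((n : ℝ≥0∞)⁻¹ ^ p) • P f) s
        = ∑ f : Fin p → Fin n,
            (((n - p).factorial : ℝ≥0∞) * (n.factorial : ℝ≥0∞)⁻¹) * P f s := by
      rw [Measure.smul_apply, Measure.finset_sum_apply, smul_eq_mul, Finset.mul_sum]
      refine Finset.sum_congr rfl fun f _ => ?_
      rw [Measure.smul_apply, smul_eq_mul, ← mul_assoc, hcoef]
    rw [lhs_eq, rhs_eq]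
    exact Finset.sum_le_sum_of_subset (Finset.filter_subset _ _)
  have hb1 : 1 ≤ b := by
    have h := (Measure.le_iff.mp hle) Set.univ MeasurableSet.univ
    rw [measure_univ, Measure.smul_apply, measure_univ, smul_eq_mul, mul_one] at h
    exact h
  have hbne0 : b ≠ 0 := by
    intro h0
    rw [h0] at hb1
    exact (not_le.mpr zero_lt_one) hb1
  have hbinvle1 : b⁻¹ ≤ 1 := ENNReal.inv_le_one.mpr hb1
  have hbinvnetop : b⁻¹ ≠ ⊤ := ENNReal.inv_ne_top.mpr hbne0
  -- Step 6: decompositions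
  haveI : IsFiniteMeasure (b • ν1p) := isFiniteMeasure_smul b hbnetop ν1p
  set ρ : Measure (Fin p → ℂ) := b • ν1p - νp with hρdef
  have hcancel : ρ + νp = b • ν1p := Measure.sub_add_cancel_of_le hle
  have hρuniv : ρ Set.univ = b - 1 := by
    rw [hρdef, Measure.sub_apply MeasurableSet.univ hle, Measure.smul_apply,
      measure_univ, measure_univ, smul_eq_mul, mul_one]
  haveI : IsFiniteMeasure ρ :=
    ⟨by rw [hρuniv]; exact lt_of_le_of_lt (tsub_le_self) hbnetop.lt_top⟩
  set κm : Measure (Fin p → ℂ) := b⁻¹ • νp with hκdef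
  set σ : Measure (Fin p → ℂ) := (1 - b⁻¹) • νp with hσdef
  set τ : Measure (Fin p → ℂ) := b⁻¹ • ρ with hτdef
  haveI : IsFiniteMeasure κm := isFiniteMeasure_smul _ hbinvnetop νp
  haveI : IsFiniteMeasure σ :=
    isFiniteMeasure_smul _ (by exact ne_top_of_le_ne_top ENNReal.one_ne_top tsub_le_self) νp
  haveI : IsFiniteMeasure τ := isFiniteMeasure_smul _ hbinvnetop ρ
  have hνp_dec : νp = κm + σ := by
    rw [hκdef, hσdef, ← add_smul, add_tsub_cancel_of_le hbinvle1, one_smul]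
  have hν1p_dec : ν1p = κm + τ := by
    have h := congrArg (fun m : Measure (Fin p → ℂ) => b⁻¹ • m) hcancel
    simp only [smul_add] at h
    rw [smul_smul, ENNReal.inv_mul_cancel hbne0 hbnetop, one_smul] at h
    rw [← h, hκdef, hτdef, add_comm]
  have hsub : νp.toSignedMeasure - ν1p.toSignedMeasure
      = σ.toSignedMeasure - τ.toSignedMeasure := by
    rw [toSignedMeasure_congr hνp_dec, toSignedMeasure_congr hν1p_dec,
      Measure.toSignedMeasure_add, Measure.toSignedMeasure_add]
    abel
  have hσuniv : σ Set.univ = 1 - b⁻¹ := by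
    rw [hσdef, Measure.smul_apply, measure_univ, smul_eq_mul, mul_one]
  have hτuniv : τ Set.univ = b⁻¹ * (b - 1) := by
    rw [hτdef, Measure.smul_apply, hρuniv, smul_eq_mul]
  calc (νp.toSignedMeasure - ν1p.toSignedMeasure).totalVariation Set.univ
      = (σ.toSignedMeasure - τ.toSignedMeasure).totalVariation Set.univ := by rw [hsub]
    _ ≤ σ Set.univ + τ Set.univ := tv_sub_le σ τ
    _ = (1 - b⁻¹) + b⁻¹ * (b - 1) := by rw [hσuniv, hτuniv]
    _ ≤ ENNReal.ofReal
          (2 * (((n - p).factorial : ℝ) * (n : ℝ) ^ p / (n.factorial : ℝ) - 1)) := by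
        set r : ℝ := b.toReal with hrdef
        have hr1 : 1 ≤ r := by
          rw [hrdef]
          have := ENNReal.toReal_mono hbnetop hb1
          simpa using this
        have hr0 : 0 < r := lt_of_lt_of_le one_pos hr1
        have hrB : r = ((n - p).factorial : ℝ) * (n : ℝ) ^ p / (n.factorial : ℝ) := by
          rw [hrdef, hbdef, ENNReal.toReal_mul, ENNReal.toReal_mul, ENNReal.toReal_inv]
          simp [div_eq_mul_inv]
        have hne1 : (1 - b⁻¹ : ℝ≥0∞) ≠ ⊤ :=
          ne_top_of_le_ne_top ENNReal.one_ne_top tsub_le_self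
        have hne2 : (b⁻¹ * (b - 1) : ℝ≥0∞) ≠ ⊤ :=
          ENNReal.mul_ne_top hbinvnetop (ne_top_of_le_ne_top hbnetop tsub_le_self)
        have hRHS0 : (0 : ℝ) ≤ 2 * (((n - p).factorial : ℝ) * (n : ℝ) ^ p
            / (n.factorial : ℝ) - 1) := by
          rw [← hrB]; linarith
        rw [ENNReal.le_ofReal_iff_toReal_le (ENNReal.add_ne_top.mpr ⟨hne1, hne2⟩) hRHS0,
          ENNReal.toReal_add hne1 hne2, ENNReal.toReal_sub_of_le hbinvle1 ENNReal.one_ne_top,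
          ENNReal.toReal_mul, ENNReal.toReal_sub_of_le hb1 hbnetop, ENNReal.toReal_inv,
          ENNReal.toReal_one, ← hrdef, ← hrB]
        have h1r : r⁻¹ * r = 1 := inv_mul_cancel₀ hr0.ne'
        have hexp : r⁻¹ * (r - 1) = 1 - r⁻¹ := by
          rw [mul_sub, h1r, mul_one]
        rw [hexp]
        have hkey : r⁻¹ + r ≥ 2 := by
          nlinarith [mul_nonneg (inv_nonneg.mpr hr0.le) (sq_nonneg (r - 1)), h1r]
        linarith
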